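/- McDiarmid's inequality: let X_1,…,X_n be independent random variables and f a function satisfying the bounded differences property with constants c_1,…,c_n (changing the i-th coordinate changes f by at most c_i). Then for all t > 0, P(|f(X_1,…,X_n) − E[f(X_1,…,X_n)]| ≥ t) ≤ 2 exp(−2t² / ∑_{i=1}^n c_i²). -/

import Mathlib

open MeasureTheory ProbabilityTheory Real


section core
variable {p : ℝ}

private lemma h_pos (hp0 : 0 ≤ p) (hp1 : p ≤ 1) (u : ℝ) : 0 < 1 - p + p * exp u := by
  rcases eq_or_lt_of_le hp0 with h | h
  · simp [← h]
  · have := exp_pos u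
    nlinarith

/-- The analytic core of Hoeffding's lemma. -/
lemma phi_le (hp0 : 0 ≤ p) (hp1 : p ≤ 1) (u : ℝ) :
    -p * u + log (1 - p + p * exp u) ≤ u ^ 2 / 8 := by
  set φ : ℝ → ℝ := fun u => -p * u + log (1 - p + p * exp u) with hφ
  set D : ℝ → ℝ := fun u => -p + p * exp u / (1 - p + p * exp u) with hD
  have hder : ∀ u : ℝ, HasDerivAt φ (D u) u := by
    intro u
    have h1 : HasDerivAt (fun u : ℝ => 1 - p + p * exp u) (p * exp u) u := by
      simpa using (((hasDerivAt_exp u).const_mul p).const_add (1 - p))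
    have h2 : HasDerivAt (fun u : ℝ => log (1 - p + p * exp u))
        (p * exp u / (1 - p + p * exp u)) u := h1.log (h_pos hp0 hp1 u).ne'
    have h3 := ((hasDerivAt_id u).const_mul (-p)).add h2
    exact h3.congr_deriv (by simp [hD])
  have hder2 : ∀ u : ℝ, HasDerivAt D
      (p * exp u * (1 - p) / (1 - p + p * exp u) ^ 2) u := by
    intro u
    have h1 : HasDerivAt (fun u : ℝ => 1 - p + p * exp u) (p * exp u) u := by
      simpa using (((hasDerivAt_exp u).const_mul p).const_add (1 - p))
    have h2 := ((hasDerivAt_exp u).const_mul p).div h1 (h_pos hp0 hp1 u).ne'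
    have : (p * exp u * (1 - p + p * exp u) - p * exp u * (p * exp u)) /
        (1 - p + p * exp u) ^ 2 = p * exp u * (1 - p) / (1 - p + p * exp u) ^ 2 := by
      ring
    simpa [hD, this] using h2.const_add (-p)
  have hD2le : ∀ u : ℝ, p * exp u * (1 - p) / (1 - p + p * exp u) ^ 2 ≤ 1 / 4 := by
    intro u
    rw [div_le_div_iff₀ (pow_pos (h_pos hp0 hp1 u) 2) (by norm_num)]
    nlinarith [sq_nonneg (1 - p - p * exp u), exp_pos u]
  -- ψ u = u^2/8 - φ u ; ψ' u = u/4 - D u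
  set ψ' : ℝ → ℝ := fun u => u / 4 - D u with hψ'
  have hψ'der : ∀ u : ℝ, HasDerivAt (fun u => u ^ 2 / 8 - φ u) (ψ' u) u := by
    intro u
    have h1 : HasDerivAt (fun u : ℝ => u ^ 2 / 8) (u / 4) u := by
      have := ((hasDerivAt_pow 2 u).div_const 8)
      simpa [hψ'] using this.congr_deriv (by ring)
    exact h1.sub (hder u)
  have hψ'mono : Monotone ψ' := by
    have hdiff : Differentiable ℝ ψ' := by
      intro u
      exact ((hasDerivAt_id u).div_const 4 |>.sub (hder2 u)).differentiableAt
    apply monotone_of_deriv_nonneg hdiff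
    intro u
    have : HasDerivAt ψ' (1 / 4 - p * exp u * (1 - p) / (1 - p + p * exp u) ^ 2) u := by
      exact ((hasDerivAt_id u).div_const 4).sub (hder2 u)
    rw [this.deriv]
    linarith [hD2le u]
  have hψ'0 : ψ' 0 = 0 := by simp [hψ', hD]
  have hψ0 : (0:ℝ) ^ 2 / 8 - φ 0 = 0 := by simp [hφ]
  set ψ : ℝ → ℝ := fun u => u ^ 2 / 8 - φ u with hψ
  have key : ∀ u : ℝ, 0 ≤ ψ u := by
    intro u
    have hcont : Continuous ψ := by
      have : Differentiable ℝ ψ := fun u => (hψ'der u).differentiableAt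
      exact this.continuous
    rcases le_or_gt 0 u with h | h
    · have hmono : MonotoneOn ψ (Set.Ici 0) := by
        apply monotoneOn_of_deriv_nonneg (convex_Ici 0) hcont.continuousOn
        · intro x hx
          exact (hψ'der x).differentiableAt.differentiableWithinAt
        · intro x hx
          rw [(hψ'der x).deriv]
          rw [interior_Ici] at hx
          have := hψ'mono (le_of_lt hx)
          rw [hψ'0] at this
          linarith
      have := hmono (Set.self_mem_Ici) (Set.mem_Ici.2 h) h
      simpa [hψ, hψ0] using this
    · have hanti : AntitoneOn ψ (Set.Iic 0) := by
        apply antitoneOn_of_deriv_nonpos (convex_Iic 0) hcont.continuousOn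
        · intro x hx
          exact (hψ'der x).differentiableAt.differentiableWithinAt
        · intro x hx
          rw [(hψ'der x).deriv]
          rw [interior_Iic] at hx
          have := hψ'mono (le_of_lt hx)
          rw [hψ'0] at this
          linarith
      have := hanti (Set.mem_Iic.2 h.le) (Set.self_mem_Iic) h.le
      simpa [hψ, hψ0] using this
  have := key u
  simp only [hψ, hφ] at this
  linarith
end core

lemma integrable_of_bounded' {α : Type*} [MeasurableSpace α] {μ : Measure α}
    [IsFiniteMeasure μ] {g : α → ℝ} (hg : Measurable g) {C : ℝ} (h : ∀ x, |g x| ≤ C) :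
    Integrable g μ :=
  ⟨hg.aestronglyMeasurable, HasFiniteIntegral.of_bounded (C := C) (ae_of_all _ h)⟩

lemma hoeffding_lemma {α : Type*} [MeasurableSpace α] (μ : Measure α)
    [IsProbabilityMeasure μ] {Y : α → ℝ} (hY : Measurable Y) {a b : ℝ}
    (hab : ∀ x, Y x ∈ Set.Icc a b) (h0 : ∫ x, Y x ∂μ = 0) (s : ℝ) :
    ∫ x, exp (s * Y x) ∂μ ≤ exp (s ^ 2 * (b - a) ^ 2 / 8) := by
  have hne : Nonempty α := by
    by_contra h
    have h1 : μ Set.univ = 1 := measure_univ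
    rw [Set.univ_eq_empty_iff.2 (not_nonempty_iff.1 h)] at h1
    simp at h1
  obtain ⟨x₀⟩ := hne
  have hab' : a ≤ b := le_trans (hab x₀).1 (hab x₀).2
  -- integrability of Y and exp (s * Y)
  have hYbd : ∀ x, |Y x| ≤ |a| + |b| := by
    intro x
    rcases hab x with ⟨h1, h2⟩
    rw [abs_le]; constructor
    · have := neg_abs_le a; have := abs_nonneg b; linarith
    · have := le_abs_self b; have := abs_nonneg a; linarith
  have hYint : Integrable Y μ := integrable_of_bounded' hY hYbd
  have hexpbd : ∀ (r : ℝ) (x : α), |exp (r * Y x)| ≤ exp (|r| * (|a| + |b|)) := by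
    intro r x
    rw [abs_of_pos (exp_pos _), exp_le_exp]
    calc r * Y x ≤ |r * Y x| := le_abs_self _
      _ = |r| * |Y x| := abs_mul _ _
      _ ≤ |r| * (|a| + |b|) := by
          exact mul_le_mul_of_nonneg_left (hYbd x) (abs_nonneg r)
  have hexpint : ∀ r : ℝ, Integrable (fun x => exp (r * Y x)) μ := fun r =>
    integrable_of_bounded' ((hY.const_mul r).exp) (hexpbd r)
  rcases eq_or_lt_of_le hab' with heq | hlt
  · -- a = b : Y is constant, equal to 0
    have hY0 : ∀ x, Y x = a := fun x => le_antisymm (heq ▸ (hab x).2) (hab x).1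
    have ha0 : a = 0 := by
      have : ∫ x, Y x ∂μ = a := by
        rw [show (fun x => Y x) = fun _ : α => a from funext hY0]
        simp
      rw [this] at h0; exact h0
    simp only [hY0, ha0, mul_zero, exp_zero]
    simp only [integral_const, measure_univ, ENNReal.toReal_one, probReal_univ, smul_eq_mul, one_mul]
    exact one_le_exp (by positivity)
  -- main case a < b
  have hba : 0 < b - a := sub_pos.2 hlt
  have ha0 : a ≤ 0 := by
    have : ∫ _ : α, a ∂μ ≤ ∫ x, Y x ∂μ :=
      integral_mono (integrable_const a) hYint fun x => (hab x).1
    rw [h0] at this; simpa using this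
  have hb0 : 0 ≤ b := by
    have : ∫ x, Y x ∂μ ≤ ∫ _ : α, b ∂μ :=
      integral_mono hYint (integrable_const b) fun x => (hab x).2
    rw [h0] at this; simpa using this
  set k1 : ℝ := (b * exp (s * a) - a * exp (s * b)) / (b - a) with hk1
  set k2 : ℝ := (exp (s * b) - exp (s * a)) / (b - a) with hk2
  -- pointwise convexity bound
  have hconv : ∀ x, exp (s * Y x) ≤ k1 + k2 * Y x := by
    intro x
    rcases hab x with ⟨h1, h2⟩
    have ht1 : 0 ≤ (b - Y x) / (b - a) := div_nonneg (by linarith) hba.le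
    have ht2 : 0 ≤ (Y x - a) / (b - a) := div_nonneg (by linarith) hba.le
    have hsum : (b - Y x) / (b - a) + (Y x - a) / (b - a) = 1 := by
      field_simp; ring
    have := convexOn_exp.2 (Set.mem_univ (s * a)) (Set.mem_univ (s * b)) ht1 ht2 hsum
    simp only [smul_eq_mul] at this
    have harg : (b - Y x) / (b - a) * (s * a) + (Y x - a) / (b - a) * (s * b) = s * Y x := by
      field_simp; ring
    rw [harg] at this
    calc exp (s * Y x) ≤ (b - Y x) / (b - a) * exp (s * a) + (Y x - a) / (b - a) * exp (s * b) := this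
      _ = k1 + k2 * Y x := by rw [hk1, hk2]; field_simp; ring
  -- integrate
  have hint : ∫ x, exp (s * Y x) ∂μ ≤ k1 := by
    have h1 : ∫ x, (k1 + k2 * Y x) ∂μ = k1 := by
      rw [integral_add (integrable_const k1) (hYint.const_mul k2), MeasureTheory.integral_const_mul, h0]
      simp
    calc ∫ x, exp (s * Y x) ∂μ ≤ ∫ x, (k1 + k2 * Y x) ∂μ :=
          integral_mono (hexpint s) ((integrable_const k1).add (hYint.const_mul k2)) hconv
      _ = k1 := h1
  -- bound k1 via the analytic core
  set p : ℝ := -a / (b - a) with hp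
  set u : ℝ := s * (b - a) with hu
  have hp0 : 0 ≤ p := by rw [hp]; exact div_nonneg (by linarith) hba.le
  have hp1 : p ≤ 1 := by rw [hp, div_le_one hba]; linarith
  have hk1eq : k1 = exp (s * a) * (1 - p + p * exp u) := by
    have he : exp u = exp (s * b) / exp (s * a) := by
      rw [← exp_sub]; congr 1; rw [hu]; ring
    rw [hk1, hp, he]
    field_simp
    ring
  have hcore := phi_le hp0 hp1 u
  have hlogpos := h_pos hp0 hp1 u
  have : k1 = exp (-p * u + log (1 - p + p * exp u)) := by
    rw [exp_add, exp_log hlogpos, hk1eq]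
    congr 1
    congr 1
    rw [hp, hu]; field_simp
  calc ∫ x, exp (s * Y x) ∂μ ≤ k1 := hint
    _ = exp (-p * u + log (1 - p + p * exp u)) := this
    _ ≤ exp (u ^ 2 / 8) := exp_le_exp.2 hcore
    _ = exp (s ^ 2 * (b - a) ^ 2 / 8) := by rw [hu]; ring_nf

universe u

lemma abs_integral_le_integral_abs' {α : Type*} [MeasurableSpace α] {μ : Measure α}
    {f : α → ℝ} : |∫ x, f x ∂μ| ≤ ∫ x, |f x| ∂μ := by
  simpa [Real.norm_eq_abs] using norm_integral_le_integral_norm (μ := μ) f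

lemma nonempty_of_prob {α : Type*} [MeasurableSpace α] (μ : Measure α)
    [IsProbabilityMeasure μ] : Nonempty α := by
  by_contra h
  have h1 : μ Set.univ = 1 := measure_univ
  rw [Set.univ_eq_empty_iff.2 (not_nonempty_iff.1 h)] at h1
  simp at h1

lemma abs_sub_le_sum_of_bd {n : ℕ} {𝒳 : Fin n → Type u} (f : (∀ i, 𝒳 i) → ℝ)
    (c : Fin n → ℝ)
    (hbd : ∀ (x x' : ∀ i, 𝒳 i) (i : Fin n), (∀ j, j ≠ i → x j = x' j) →
      |f x - f x'| ≤ c i)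
    (s : Finset (Fin n)) :
    ∀ x x' : ∀ i, 𝒳 i, (∀ j ∉ s, x j = x' j) → |f x - f x'| ≤ ∑ i ∈ s, c i := by
  classical
  induction s using Finset.induction_on with
  | empty =>
    intro x x' h
    have : x = x' := funext fun j => h j (Finset.notMem_empty j)
    simp [this]
  | insert i s hi ih =>
    intro x x' h
    set x'' : ∀ i, 𝒳 i := Function.update x i (x' i) with hx''
    have h1 : |f x - f x''| ≤ c i := by
      apply hbd x x'' i
      intro j hj
      rw [hx'', Function.update_of_ne hj]
    have h2 : |f x'' - f x'| ≤ ∑ k ∈ s, c k := by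
      apply ih x'' x'
      intro j hj
      by_cases hji : j = i
      · subst hji; rw [hx'', Function.update_self]
      · rw [hx'', Function.update_of_ne hji]
        exact h j (by simp [hji, hj])
    calc |f x - f x'| ≤ |f x - f x''| + |f x'' - f x'| := abs_sub_le _ _ _
      _ ≤ c i + ∑ k ∈ s, c k := add_le_add h1 h2
      _ = ∑ k ∈ insert i s, c k := (Finset.sum_insert hi).symm

lemma mgf_bound (n : ℕ) : ∀ {𝒳 : Fin n → Type u} [inst : ∀ i, MeasurableSpace (𝒳 i)]
    (μ : ∀ i, Measure (𝒳 i)) [hprob : ∀ i, IsProbabilityMeasure (μ i)]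
    (f : (∀ i, 𝒳 i) → ℝ) (hf : Measurable f) (c : Fin n → ℝ)
    (hbd : ∀ (x x' : ∀ i, 𝒳 i) (i : Fin n), (∀ j, j ≠ i → x j = x' j) →
      |f x - f x'| ≤ c i)
    (s : ℝ),
    ∫ x, exp (s * (f x - ∫ y, f y ∂(Measure.pi μ))) ∂(Measure.pi μ)
      ≤ exp (s ^ 2 * (∑ i, c i ^ 2) / 8) := by
  induction n with
  | zero =>
    intro 𝒳 inst μ hprob f hf c hbd s
    have hconst : ∀ x : ∀ i, 𝒳 i, f x = f default :=
      fun x => congrArg f (Subsingleton.elim x default)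
    have hm : ∫ y, f y ∂(Measure.pi μ) = f default := by
      rw [show (fun y => f y) = fun _ : (∀ i, 𝒳 i) => f default from funext hconst]
      simp
    have : ∀ x : ∀ i, 𝒳 i, exp (s * (f x - ∫ y, f y ∂(Measure.pi μ))) = 1 := by
      intro x; rw [hm, hconst x]; simp
    rw [show (fun x => exp (s * (f x - ∫ y, f y ∂(Measure.pi μ))))
        = fun _ : (∀ i, 𝒳 i) => (1:ℝ) from funext this]
    simp
  | succ n ih =>
    intro 𝒳 inst μ hprob f hf c hbd s
    classical
    -- setup
    have hne : ∀ i, Nonempty (𝒳 i) := fun i => nonempty_of_prob (μ i)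
    have hz : Nonempty (∀ i, 𝒳 i) := ⟨fun i => Classical.choice (hne i)⟩
    obtain ⟨z₀⟩ := hz
    have hci : ∀ i, 0 ≤ c i := by
      intro i
      have := hbd z₀ z₀ i (fun _ _ => rfl)
      simpa using this
    set B : ℝ := |f z₀| + ∑ i, c i with hB
    have hfbd : ∀ x, |f x| ≤ B := by
      intro x
      have h1 : |f x - f z₀| ≤ ∑ i, c i :=
        abs_sub_le_sum_of_bd f c hbd Finset.univ x z₀ (fun j hj => absurd (Finset.mem_univ j) hj)
      calc |f x| = |f z₀ + (f x - f z₀)| := by ring_nf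
        _ ≤ |f z₀| + |f x - f z₀| := abs_add_le _ _
        _ ≤ B := by rw [hB]; linarith
    set e := MeasurableEquiv.piFinSuccAbove 𝒳 0 with he
    have mp := MeasureTheory.measurePreserving_piFinSuccAbove μ 0
    set ν : ∀ j : Fin n, Measure (𝒳 ((0 : Fin (n+1)).succAbove j)) :=
      fun j => μ ((0 : Fin (n+1)).succAbove j) with hν
    haveI : ∀ j, IsProbabilityMeasure (ν j) := fun j => hprob _
    set Pm := Measure.pi μ with hPm
    set Pν := Measure.pi ν with hPν
    set prodm := (μ 0).prod Pν with hprodm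
    set g : 𝒳 0 × (∀ j : Fin n, 𝒳 ((0 : Fin (n+1)).succAbove j)) → ℝ :=
      fun p => f (e.symm p) with hgdef
    have hg : Measurable g := hf.comp e.symm.measurable
    have hgbd : ∀ p, |g p| ≤ B := fun p => hfbd _
    have hsymm : ∀ x y, e.symm (x, y) = Fin.insertNth 0 x y := fun x y => rfl
    -- coordinate facts
    have fact1 : ∀ (x x' : 𝒳 0) y, |g (x, y) - g (x', y)| ≤ c 0 := by
      intro x x' y
      apply hbd _ _ 0
      intro j hj
      obtain ⟨k, hk⟩ := Fin.exists_succAbove_eq hj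
      rw [hsymm, hsymm, ← hk, Fin.insertNth_apply_succAbove, Fin.insertNth_apply_succAbove]
    have fact2 : ∀ (x : 𝒳 0) y y' (j : Fin n), (∀ k, k ≠ j → y k = y' k) →
        |g (x, y) - g (x, y')| ≤ c ((0 : Fin (n+1)).succAbove j) := by
      intro x y y' j hyy'
      apply hbd _ _ ((0 : Fin (n+1)).succAbove j)
      intro k hk
      rw [hsymm, hsymm]
      by_cases hk0 : k = 0
      · subst hk0; rw [Fin.insertNth_apply_same, Fin.insertNth_apply_same]
      · obtain ⟨k', hk'⟩ := Fin.exists_succAbove_eq hk0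
        rw [← hk', Fin.insertNth_apply_succAbove, Fin.insertNth_apply_succAbove]
        exact hyy' k' (fun h => hk (by rw [← hk', h]))
    -- the conditional mean
    set G : (∀ j : Fin n, 𝒳 ((0 : Fin (n+1)).succAbove j)) → ℝ :=
      fun y => ∫ x, g (x, y) ∂(μ 0) with hGdef
    have hGmeas : Measurable G :=
      (hg.stronglyMeasurable.integral_prod_left').measurable
    have hgx_meas : ∀ y, Measurable fun x => g (x, y) :=
      fun y => hg.comp (measurable_id.prodMk measurable_const)
    have hgx_int : ∀ y, Integrable (fun x => g (x, y)) (μ 0) :=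
      fun y => integrable_of_bounded' (hgx_meas y) (fun x => hgbd (x, y))
    have hGbd : ∀ y, |G y| ≤ B := by
      intro y
      calc |G y| ≤ ∫ x, |g (x, y)| ∂(μ 0) := abs_integral_le_integral_abs'
        _ ≤ ∫ _, B ∂(μ 0) :=
            integral_mono ((hgx_int y).abs) (integrable_const B) (fun x => hgbd (x, y))
        _ = B := by simp
    have hGbdiff : ∀ (y y' : ∀ j : Fin n, 𝒳 ((0 : Fin (n+1)).succAbove j)) (j : Fin n),
        (∀ k, k ≠ j → y k = y' k) → |G y - G y'| ≤ c ((0 : Fin (n+1)).succAbove j) := by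
      intro y y' j hyy'
      have : G y - G y' = ∫ x, (g (x, y) - g (x, y')) ∂(μ 0) :=
        (integral_sub (hgx_int y) (hgx_int y')).symm
      rw [this]
      calc |∫ x, (g (x, y) - g (x, y')) ∂(μ 0)| ≤ ∫ x, |g (x, y) - g (x, y')| ∂(μ 0) :=
            abs_integral_le_integral_abs'
        _ ≤ ∫ _, c ((0 : Fin (n+1)).succAbove j) ∂(μ 0) :=
            integral_mono (((hgx_int y).sub (hgx_int y')).abs) (integrable_const _)
              (fun x => fact2 x y y' j hyy')
        _ = c ((0 : Fin (n+1)).succAbove j) := by simp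
    set m := ∫ y, f y ∂Pm with hm
    have hmbd : |m| ≤ B := by
      calc |m| ≤ ∫ x, |f x| ∂Pm := abs_integral_le_integral_abs'
        _ ≤ ∫ _, B ∂Pm := integral_mono ((integrable_of_bounded' hf hfbd).abs)
            (integrable_const B) hfbd
        _ = B := by simp
    have hgint : Integrable g prodm := integrable_of_bounded' hg hgbd
    have hint_comp : ∫ x, f x ∂Pm = ∫ p, g p ∂prodm := by
      rw [← mp.integral_comp e.measurableEmbedding g]
      congr 1
      funext x
      rw [hgdef]
      simp
      exact congrArg f (e.symm_apply_apply x).symm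
    have hGint_eq : ∫ y, G y ∂Pν = m := by
      rw [hm, hint_comp, integral_prod_symm g hgint]
    -- main chain
    have hexp_bd : ∀ p, |exp (s * (g p - m))| ≤ exp (|s| * (B + B)) := by
      intro p
      rw [abs_of_pos (exp_pos _), exp_le_exp]
      calc s * (g p - m) ≤ |s * (g p - m)| := le_abs_self _
        _ = |s| * |g p - m| := abs_mul _ _
        _ ≤ |s| * (B + B) := by
            apply mul_le_mul_of_nonneg_left _ (abs_nonneg s)
            calc |g p - m| ≤ |g p| + |m| := abs_sub _ _
              _ ≤ B + B := add_le_add (hgbd p) hmbd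
    have hexpint : Integrable (fun p => exp (s * (g p - m))) prodm :=
      integrable_of_bounded' (((hg.sub_const m).const_mul s).exp) hexp_bd
    set K0 := exp (s ^ 2 * c 0 ^ 2 / 8) with hK0
    have hA3 : ∀ y, ∫ x, exp (s * (g (x, y) - m)) ∂(μ 0) ≤ exp (s * (G y - m)) * K0 := by
      intro y
      have hsplit : ∀ x, exp (s * (g (x, y) - m))
          = exp (s * (G y - m)) * exp (s * (g (x, y) - G y)) := by
        intro x
        rw [← exp_add]
        congr 1
        ring
      rw [show (fun x => exp (s * (g (x, y) - m)))
          = fun x => exp (s * (G y - m)) * exp (s * (g (x, y) - G y)) from funext hsplit]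
      rw [MeasureTheory.integral_const_mul]
      apply mul_le_mul_of_nonneg_left _ (exp_pos _).le
      -- Hoeffding for x ↦ g (x, y) - G y
      set a : ℝ := sInf (Set.range fun x => g (x, y)) with ha
      have hrange_ne : (Set.range fun x => g (x, y)).Nonempty :=
        Set.range_nonempty _
      have hbdd : BddBelow (Set.range fun x => g (x, y)) := by
        refine ⟨-B, ?_⟩
        rintro r ⟨x, rfl⟩
        have := hgbd (x, y)
        exact neg_le_of_abs_le this
      have hY : Measurable fun x => g (x, y) - G y := (hgx_meas y).sub_const _
      have hbounds : ∀ x, (fun x => g (x, y) - G y) x ∈ Set.Icc (a - G y) (a + c 0 - G y) := by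
        intro x
        constructor
        · have : a ≤ g (x, y) := csInf_le hbdd ⟨x, rfl⟩
          simpa using this
        · have hlb : g (x, y) - c 0 ≤ a := by
            apply le_csInf hrange_ne
            rintro r ⟨x', rfl⟩
            have := fact1 x x' y
            have := abs_le.1 this
            linarith [this.2]
          simp only [Set.mem_Icc]
          linarith
      have hmean : ∫ x, (g (x, y) - G y) ∂(μ 0) = 0 := by
        rw [integral_sub (hgx_int y) (integrable_const _)]
        simp [hGdef]
      have := hoeffding_lemma (μ 0) hY hbounds hmean s
      calc ∫ x, exp (s * (g (x, y) - G y)) ∂(μ 0)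
          ≤ exp (s ^ 2 * ((a + c 0 - G y) - (a - G y)) ^ 2 / 8) := this
        _ = K0 := by rw [hK0]; ring_nf
    have hGexp_bd : ∀ y, |exp (s * (G y - m)) * K0| ≤ exp (|s| * (B + B)) * K0 := by
      intro y
      rw [abs_mul, abs_of_pos (exp_pos _), abs_of_pos (exp_pos _)]
      apply mul_le_mul_of_nonneg_right _ (exp_pos _).le
      rw [exp_le_exp]
      calc s * (G y - m) ≤ |s * (G y - m)| := le_abs_self _
        _ = |s| * |G y - m| := abs_mul _ _
        _ ≤ |s| * (B + B) := by
            apply mul_le_mul_of_nonneg_left _ (abs_nonneg s)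
            calc |G y - m| ≤ |G y| + |m| := abs_sub _ _
              _ ≤ B + B := add_le_add (hGbd y) hmbd
    have hGexp_meas : Measurable fun y => exp (s * (G y - m)) * K0 :=
      (((hGmeas.sub_const m).const_mul s).exp).mul_const _
    have hA4 : ∫ y, (∫ x, exp (s * (g (x, y) - m)) ∂(μ 0)) ∂Pν
        ≤ ∫ y, exp (s * (G y - m)) * K0 ∂Pν := by
      apply integral_mono _ _ hA3
      · exact hexpint.integral_prod_right
      · exact integrable_of_bounded' hGexp_meas hGexp_bd
    have hGexpint : Integrable (fun y => exp (s * (G y - m))) Pν := by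
      apply integrable_of_bounded' (((hGmeas.sub_const m).const_mul s).exp)
      intro y
      have := hGexp_bd y
      rw [abs_mul, abs_of_pos (exp_pos (s ^ 2 * c 0 ^ 2 / 8) : (0:ℝ) < K0)] at this
      rw [abs_of_pos (exp_pos _)]
      rw [abs_of_pos (exp_pos _)] at this
      exact le_of_mul_le_mul_right this (exp_pos _)
    have hA6 : ∫ y, exp (s * (G y - m)) ∂Pν
        ≤ exp (s ^ 2 * (∑ j, c ((0 : Fin (n+1)).succAbove j) ^ 2) / 8) := by
      have := ih ν G hGmeas (fun j => c ((0 : Fin (n+1)).succAbove j)) hGbdiff s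
      rwa [hGint_eq] at this
    calc ∫ x, exp (s * (f x - m)) ∂Pm
        = ∫ p, exp (s * (g p - m)) ∂prodm := by
          rw [← mp.integral_comp e.measurableEmbedding (fun p => exp (s * (g p - m)))]
          congr 1
          funext x
          rw [hgdef]
          simp
          left
          exact congrArg f (e.symm_apply_apply x).symm
      _ = ∫ y, (∫ x, exp (s * (g (x, y) - m)) ∂(μ 0)) ∂Pν :=
          integral_prod_symm _ hexpint
      _ ≤ ∫ y, exp (s * (G y - m)) * K0 ∂Pν := hA4
      _ = (∫ y, exp (s * (G y - m)) ∂Pν) * K0 := integral_mul_const _ _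
      _ ≤ exp (s ^ 2 * (∑ j, c ((0 : Fin (n+1)).succAbove j) ^ 2) / 8) * K0 :=
          mul_le_mul_of_nonneg_right hA6 (exp_pos _).le
      _ = exp (s ^ 2 * (∑ i, c i ^ 2) / 8) := by
          rw [hK0, ← exp_add, Fin.sum_univ_succAbove (fun i => c i ^ 2) 0]
          congr 1
          ring

/-- McDiarmid's inequality: for independent random variables `X i` and a function `f`
satisfying the bounded differences property with constants `c i`, for all `t > 0`,
`P(|f(X) − E[f(X)]| ≥ t) ≤ 2 exp(−2t² / ∑ i, c i ^ 2)`. -/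
theorem mcdiarmid {Ω : Type*} [MeasureSpace Ω] [IsProbabilityMeasure (ℙ : Measure Ω)]
    {n : ℕ} {𝒳 : Fin n → Type*} [∀ i, MeasurableSpace (𝒳 i)]
    (X : ∀ i, Ω → 𝒳 i) (hXmeas : ∀ i, Measurable (X i))
    (hindep : iIndepFun X ℙ)
    (f : (∀ i, 𝒳 i) → ℝ) (hf : Measurable f)
    (c : Fin n → ℝ)
    (hbd : ∀ (x x' : ∀ i, 𝒳 i) (i : Fin n), (∀ j, j ≠ i → x j = x' j) →
      |f x - f x'| ≤ c i)
    (t : ℝ) (ht : 0 < t) :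
    (ℙ {ω | t ≤ |f (fun i => X i ω) - ∫ ω', f (fun i => X i ω') ∂ℙ|}).toReal ≤
      2 * Real.exp (-2 * t ^ 2 / ∑ i, c i ^ 2) := by
  classical
  haveI : ∀ i, IsProbabilityMeasure (Measure.map (X i) ℙ) :=
    fun i => Measure.isProbabilityMeasure_map (hXmeas i).aemeasurable
  set μ : ∀ i, Measure (𝒳 i) := fun i => Measure.map (X i) ℙ with hμ
  set P := Measure.pi μ with hP
  have hvec : Measurable (fun ω i => X i ω) := measurable_pi_iff.2 hXmeas
  -- the law of the vector is the product measure
  have hlaw : Measure.map (fun ω i => X i ω) ℙ = P := by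
    rw [hP]
    refine (Measure.pi_eq fun s hs => ?_).symm
    rw [Measure.map_apply hvec (MeasurableSet.univ_pi hs)]
    have hpre : (fun ω i => X i ω) ⁻¹' Set.pi Set.univ s = ⋂ i, X i ⁻¹' s i := by
      ext ω; simp [Set.mem_pi]
    rw [hpre]
    have := (iIndepFun_iff_measure_inter_preimage_eq_mul.1 hindep) Finset.univ
      (fun i _ => hs i)
    simp only [Finset.mem_univ] at this
    simp only [Finset.mem_univ, Set.iInter_true] at this
    rw [this]
    congr 1
    ext i
    rw [hμ, Measure.map_apply (hXmeas i) (hs i)]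
  set m := ∫ x, f x ∂P with hm
  have hmean : ∫ ω', f (fun i => X i ω') ∂ℙ = m := by
    rw [hm, ← hlaw, integral_map hvec.aemeasurable hf.aestronglyMeasurable]
  have hset : MeasurableSet {x : ∀ i, 𝒳 i | t ≤ |f x - m|} :=
    measurableSet_le measurable_const ((hf.sub_const m).abs)
  have hmeasure : ℙ {ω | t ≤ |f (fun i => X i ω) - ∫ ω', f (fun i => X i ω') ∂ℙ|}
      = P {x | t ≤ |f x - m|} := by
    rw [hmean, ← hlaw, Measure.map_apply hvec hset]
    rfl
  rw [hmeasure]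
  have hci : ∀ i, 0 ≤ c i := by
    intro i
    have hne : ∀ i, Nonempty (𝒳 i) := fun i => nonempty_of_prob (μ i)
    have z₀ : ∀ i, 𝒳 i := fun i => Classical.choice (hne i)
    have := hbd z₀ z₀ i (fun _ _ => rfl)
    simpa using this
  set S := ∑ i, c i ^ 2 with hS
  have hS0 : 0 ≤ S := Finset.sum_nonneg fun i _ => sq_nonneg _
  rcases eq_or_lt_of_le hS0 with hSeq | hSpos
  · -- degenerate case: all c i = 0, f is constant
    have hc0 : ∀ i, c i = 0 := by
      intro i
      have := Finset.sum_eq_zero_iff_of_nonneg (fun i _ => sq_nonneg (c i)) |>.1 hSeq.symm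
        i (Finset.mem_univ i)
      exact pow_eq_zero_iff (n := 2) (by norm_num) |>.1 this
    have hconst : ∀ x x' : ∀ i, 𝒳 i, f x = f x' := by
      intro x x'
      have := abs_sub_le_sum_of_bd f c hbd Finset.univ x x'
        (fun j hj => absurd (Finset.mem_univ j) hj)
      simp only [hc0, Finset.sum_const_zero] at this
      have := abs_nonpos_iff.1 this
      linarith [sub_eq_zero.1 this]
    have hempty : {x : ∀ i, 𝒳 i | t ≤ |f x - m|} = ∅ := by
      ext x
      simp only [Set.mem_setOf_eq, Set.mem_empty_iff_false, iff_false, not_le]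
      have : m = f x := by
        rw [hm, show (fun y => f y) = fun _ : (∀ i, 𝒳 i) => f x from
          funext fun y => hconst y x]
        simp
      rw [this]
      simpa using ht
    rw [hempty]
    simp
    positivity
  -- main case
  set s : ℝ := 4 * t / S with hs
  have hs0 : 0 ≤ s := by positivity
  have hfbd : ∃ B, ∀ x, |f x| ≤ B := by
    have hne : ∀ i, Nonempty (𝒳 i) := fun i => nonempty_of_prob (μ i)
    have z₀ : ∀ i, 𝒳 i := fun i => Classical.choice (hne i)
    refine ⟨|f z₀| + ∑ i, c i, fun x => ?_⟩
    have h1 : |f x - f z₀| ≤ ∑ i, c i :=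
      abs_sub_le_sum_of_bd f c hbd Finset.univ x z₀ (fun j hj => absurd (Finset.mem_univ j) hj)
    calc |f x| = |f z₀ + (f x - f z₀)| := by ring_nf
      _ ≤ |f z₀| + |f x - f z₀| := abs_add_le _ _
      _ ≤ _ := by linarith
  obtain ⟨B, hB⟩ := hfbd
  have hintexp : ∀ (h : (∀ i, 𝒳 i) → ℝ), Measurable h → (∀ x, |h x| ≤ 2 * B) →
      Integrable (fun x => exp (s * h x)) P := by
    intro h hh hhbd
    apply integrable_of_bounded' ((hh.const_mul s).exp) (C := exp (|s| * (2 * B)))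
    intro x
    rw [abs_of_pos (exp_pos _), exp_le_exp]
    calc s * h x ≤ |s * h x| := le_abs_self _
      _ = |s| * |h x| := abs_mul _ _
      _ ≤ |s| * (2 * B) := mul_le_mul_of_nonneg_left (hhbd x) (abs_nonneg s)
  have hmbd : |m| ≤ B := by
    calc |m| ≤ ∫ x, |f x| ∂P := by
          simpa [Real.norm_eq_abs] using norm_integral_le_integral_norm (μ := P) f
      _ ≤ ∫ _, B ∂P := integral_mono ((integrable_of_bounded' hf hB).abs)
          (integrable_const B) hB
      _ = B := by simp
  have hsubbd : ∀ x, |f x - m| ≤ 2 * B := fun x =>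
    calc |f x - m| ≤ |f x| + |m| := abs_sub _ _
      _ ≤ 2 * B := by linarith [hB x, hmbd]
  -- upper tail
  have hup : (P {x | t ≤ f x - m}).toReal ≤ exp (-2 * t ^ 2 / S) := by
    have hint : Integrable (fun x => exp (s * (f x - m))) P :=
      hintexp _ (hf.sub_const m) hsubbd
    have h1 := measure_ge_le_exp_mul_mgf (X := fun x => f x - m) (μ := P) t hs0 hint
    have h2 : mgf (fun x => f x - m) P s ≤ exp (s ^ 2 * S / 8) := by
      rw [mgf]
      exact hm ▸ mgf_bound n μ f hf c hbd s
    calc (P {x | t ≤ f x - m}).toReal ≤ exp (-s * t) * mgf (fun x => f x - m) P s := h1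
      _ ≤ exp (-s * t) * exp (s ^ 2 * S / 8) :=
          mul_le_mul_of_nonneg_left h2 (exp_pos _).le
      _ = exp (-s * t + s ^ 2 * S / 8) := (exp_add _ _).symm
      _ = exp (-2 * t ^ 2 / S) := by
          congr 1
          rw [hs]
          field_simp
          ring
  -- lower tail
  have hlo : (P {x | t ≤ m - f x}).toReal ≤ exp (-2 * t ^ 2 / S) := by
    have hbd' : ∀ (x x' : ∀ i, 𝒳 i) (i : Fin n), (∀ j, j ≠ i → x j = x' j) →
        |(-f) x - (-f) x'| ≤ c i := by
      intro x x' i h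
      calc |(-f) x - (-f) x'| = |f x - f x'| := by
            rw [show (-f) x - (-f) x' = -(f x - f x') by simp only [Pi.neg_apply]; ring,
              abs_neg]
        _ ≤ c i := hbd x x' i h
    have hm' : ∫ x, (-f) x ∂P = -m := by
      rw [hm, ← integral_neg]
      rfl
    have hint : Integrable (fun x => exp (s * (m - f x))) P := by
      have := hintexp (fun x => m - f x) (measurable_const.sub hf)
        (fun x => by rw [abs_sub_comm]; exact hsubbd x)
      exact this
    have h1 := measure_ge_le_exp_mul_mgf (X := fun x => m - f x) (μ := P) t hs0 hint
    have h2 : mgf (fun x => m - f x) P s ≤ exp (s ^ 2 * S / 8) := by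
      rw [mgf]
      have := mgf_bound n μ (-f) hf.neg c hbd' s
      rw [hm'] at this
      calc ∫ x, exp (s * (m - f x)) ∂P = ∫ x, exp (s * ((-f) x - -m)) ∂P := by
            congr 1; funext x; congr 1; simp only [Pi.neg_apply]; ring
        _ ≤ exp (s ^ 2 * S / 8) := this
    calc (P {x | t ≤ m - f x}).toReal ≤ exp (-s * t) * mgf (fun x => m - f x) P s := h1
      _ ≤ exp (-s * t) * exp (s ^ 2 * S / 8) :=
          mul_le_mul_of_nonneg_left h2 (exp_pos _).le
      _ = exp (-s * t + s ^ 2 * S / 8) := (exp_add _ _).symm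
      _ = exp (-2 * t ^ 2 / S) := by
          congr 1
          rw [hs]
          field_simp
          ring
  -- combine
  have hsub : {x : ∀ i, 𝒳 i | t ≤ |f x - m|}
      ⊆ {x | t ≤ f x - m} ∪ {x | t ≤ m - f x} := by
    intro x hx
    simp only [Set.mem_setOf_eq] at hx
    rcases abs_cases (f x - m) with ⟨h1, _⟩ | ⟨h1, _⟩
    · left; rw [Set.mem_setOf_eq]; linarith
    · right; rw [Set.mem_setOf_eq]; linarith
  calc (P {x | t ≤ |f x - m|}).toReal
      ≤ (P ({x | t ≤ f x - m} ∪ {x | t ≤ m - f x})).toReal := by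
        apply ENNReal.toReal_mono (measure_ne_top _ _)
        exact measure_mono hsub
    _ ≤ (P {x | t ≤ f x - m} + P {x | t ≤ m - f x}).toReal := by
        apply ENNReal.toReal_mono
        · exact ENNReal.add_ne_top.2 ⟨measure_ne_top _ _, measure_ne_top _ _⟩
        · exact measure_union_le _ _
    _ = (P {x | t ≤ f x - m}).toReal + (P {x | t ≤ m - f x}).toReal :=
        ENNReal.toReal_add (measure_ne_top _ _) (measure_ne_top _ _)
    _ ≤ exp (-2 * t ^ 2 / S) + exp (-2 * t ^ 2 / S) := add_le_add hup hlo
    _ = 2 * exp (-2 * t ^ 2 / S) := by ring
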